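/- Let f be a transcendental entire function, R > 0 with M(r) > r for r ≥ R, and A(f) = ⋃_{L ∈ ℕ} A_R^{-L}(f). Then A(f) ⊆ Z(f), where Z(f) = {z : (1/n) · log log |f^n(z)| → ∞ as n → ∞}. -/

import Mathlib

open Complex Filter Set Function

open Topology

noncomputable def maxMod (f : ℂ → ℂ) (r : ℝ) : ℝ :=
  sSup ((fun z => ‖f z‖) '' {z : ℂ | ‖z‖ = r})

def TranscendentalEntire (f : ℂ → ℂ) : Prop :=
  Differentiable ℂ f ∧ ¬ ∃ p : Polynomial ℂ, ∀ z, f z = p.eval z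

noncomputable def ALevel (f : ℂ → ℂ) (R : ℝ) (L : ℤ) : Set ℂ :=
  {z : ℂ | ∀ n : ℕ, 0 ≤ (n : ℤ) + L →
    ‖f^[n] z‖ ≥ (maxMod f)^[((n : ℤ) + L).toNat] R}

noncomputable def Afast (f : ℂ → ℂ) (R : ℝ) : Set ℂ :=
  ⋃ L : ℕ, ALevel f R (-(L : ℤ))


lemma sphere_eq' (r : ℝ) : {z : ℂ | ‖z‖ = r} = Metric.sphere (0:ℂ) r := by
  ext z; simp [Complex.dist_eq, Metric.mem_sphere]

lemma bddAbove_image' {f : ℂ → ℂ} (hf : Continuous f) (r : ℝ) :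
    BddAbove ((fun z => ‖f z‖) '' {z : ℂ | ‖z‖ = r}) := by
  rw [sphere_eq']
  exact ((isCompact_sphere (0:ℂ) r).image (hf.norm)).bddAbove

lemma le_maxMod {f : ℂ → ℂ} (hf : Continuous f) {r : ℝ} {z : ℂ} (hz : ‖z‖ = r) :
    ‖f z‖ ≤ maxMod f r :=
  le_csSup (bddAbove_image' hf r) ⟨z, hz, rfl⟩

lemma maxMod_nonneg {f : ℂ → ℂ} (hf : Continuous f) {r : ℝ} (hr : 0 ≤ r) :
    0 ≤ maxMod f r := by
  have h := le_maxMod (r := r) hf (z := circleMap 0 r 0) (by simp [norm_circleMap_zero, _root_.abs_of_nonneg hr])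
  exact (norm_nonneg _).trans h

lemma maxMod_growth {f : ℂ → ℂ} (hf : TranscendentalEntire f) (k : ℕ) :
    ∃ r0 : ℝ, 1 ≤ r0 ∧ ∀ r ≥ r0, r ^ k ≤ maxMod f r := by
  by_contra hcon
  push_neg at hcon
  -- pick a sequence r j ≥ j + 1 with maxMod f (r j) < (r j) ^ k
  have hseq : ∀ j : ℕ, ∃ r : ℝ, (j + 1 : ℝ) ≤ r ∧ maxMod f r < r ^ k := by
    intro j
    obtain ⟨r, hr1, hr2⟩ := hcon (max (j+1 : ℝ) 1) (le_max_right _ _)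
    exact ⟨r, (le_max_left _ _).trans hr1, hr2⟩
  choose rs hrs1 hrs2 using hseq
  set p := cauchyPowerSeries f 0 ((1 : NNReal) : ℝ) with hp
  have hball : HasFPowerSeriesOnBall f p 0 ⊤ := hf.1.hasFPowerSeriesOnBall 0 one_pos
  -- coefficient bound
  have hcoeff : ∀ (r : ℝ), 1 ≤ r → ∀ m : ℕ, ‖p.coeff m‖ ≤ maxMod f r * (r⁻¹) ^ m := by
    intro r hr m
    have hr0 : (0:ℝ) < r := lt_of_lt_of_le one_pos hr
    have hR : (0 : NNReal) < r.toNNReal := Real.toNNReal_pos.2 hr0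
    have hball2 : HasFPowerSeriesOnBall f (cauchyPowerSeries f 0 ((r.toNNReal : ℝ))) 0 ⊤ :=
      hf.1.hasFPowerSeriesOnBall 0 hR
    have hpe : cauchyPowerSeries f 0 ((r.toNNReal : ℝ)) = p :=
      hball2.hasFPowerSeriesAt.eq_formalMultilinearSeries hball.hasFPowerSeriesAt
    rw [Real.coe_toNNReal _ hr0.le] at hpe
    have hb := norm_cauchyPowerSeries_le f 0 r m
    rw [hpe] at hb
    rw [← FormalMultilinearSeries.norm_apply_eq_norm_coef]
    refine hb.trans ?_
    rw [_root_.abs_of_pos hr0]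
    apply mul_le_mul_of_nonneg_right _ (pow_nonneg (inv_nonneg.2 hr0.le) m)
    -- integral bound
    have hpt : ∀ θ ∈ Set.Icc (0:ℝ) (2*Real.pi), ‖f (circleMap 0 r θ)‖ ≤ maxMod f r := by
      intro θ _
      exact le_maxMod (r := r) hf.1.continuous (by simp [norm_circleMap_zero, _root_.abs_of_pos hr0])
    have hcont : Continuous fun θ : ℝ => ‖f (circleMap 0 r θ)‖ :=
      (hf.1.continuous.comp (continuous_circleMap 0 r)).norm
    have hint : (∫ θ in (0:ℝ)..2*Real.pi, ‖f (circleMap 0 r θ)‖) ≤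
        ∫ _ in (0:ℝ)..2*Real.pi, maxMod f r :=
      intervalIntegral.integral_mono_on (by positivity)
        (hcont.intervalIntegrable _ _) intervalIntegrable_const hpt
    rw [intervalIntegral.integral_const, smul_eq_mul, sub_zero] at hint
    calc (2 * Real.pi)⁻¹ * ∫ θ in (0:ℝ)..2*Real.pi, ‖f (circleMap 0 r θ)‖
        ≤ (2 * Real.pi)⁻¹ * (2 * Real.pi * maxMod f r) :=
          mul_le_mul_of_nonneg_left hint (by positivity)
      _ = maxMod f r := by
          field_simp
  -- coefficients above k vanish
  have hvanish : ∀ m : ℕ, k + 1 ≤ m → p.coeff m = 0 := by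
    intro m hm
    have hle : ∀ j : ℕ, ‖p.coeff m‖ ≤ 1 / (j + 1 : ℝ) := by
      intro j
      have hrj1 : (1:ℝ) ≤ rs j := le_trans (by have := Nat.cast_nonneg (α := ℝ) j; linarith) (hrs1 j)
      have hrj0 : (0:ℝ) < rs j := lt_of_lt_of_le one_pos hrj1
      have h1 := hcoeff (rs j) hrj1 m
      have h2 : maxMod f (rs j) * ((rs j)⁻¹) ^ m ≤ (rs j) ^ k * ((rs j)⁻¹) ^ m := by
        apply mul_le_mul_of_nonneg_right (hrs2 j).le (by positivity)
      have h3 : (rs j) ^ k * ((rs j)⁻¹) ^ m ≤ 1 / rs j := by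
        rw [inv_pow, ← div_eq_mul_inv, div_le_div_iff₀ (by positivity) hrj0, one_mul]
        calc (rs j) ^ k * rs j = (rs j) ^ (k+1) := by ring
          _ ≤ (rs j) ^ m := pow_le_pow_right₀ hrj1 hm
      have h4 : 1 / rs j ≤ 1 / (j + 1 : ℝ) :=
        one_div_le_one_div_of_le (by positivity) (hrs1 j)
      linarith
    by_contra hne
    have hpos : 0 < ‖p.coeff m‖ := norm_pos_iff.2 hne
    obtain ⟨j, hj⟩ := exists_nat_gt (1 / ‖p.coeff m‖)
    have : 1 / (j + 1 : ℝ) < ‖p.coeff m‖ := by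
      rw [div_lt_iff₀ (by positivity)]
      rw [div_lt_iff₀ hpos] at hj
      nlinarith
    linarith [hle j]
  -- f is a polynomial
  apply hf.2
  refine ⟨∑ n ∈ Finset.range (k+1), Polynomial.C (p.coeff n) * Polynomial.X ^ n, fun z => ?_⟩
  have hzball : z ∈ Metric.eball (0:ℂ) ⊤ := by simp
  have hsum := hball.hasSum hzball
  simp only [FormalMultilinearSeries.apply_eq_pow_smul_coeff, zero_add, smul_eq_mul] at hsum
  have hsum2 : HasSum (fun n : ℕ => z ^ n * p.coeff n)
      (∑ n ∈ Finset.range (k+1), z ^ n * p.coeff n) := by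
    apply hasSum_sum_of_ne_finset_zero
    intro m hm
    rw [hvanish m (Nat.le_of_not_lt (Finset.mem_range.not.1 hm)), mul_zero]
  have := hsum.unique hsum2
  rw [this, Polynomial.eval_finset_sum]
  exact Finset.sum_congr rfl fun n _ => by rw [Polynomial.eval_mul, Polynomial.eval_C, Polynomial.eval_pow, Polynomial.eval_X, mul_comm]

lemma orbit_ge {f : ℂ → ℂ} {R : ℝ} (hR : 0 < R)
    (hM : ∀ r ≥ R, maxMod f r > r) : ∀ n : ℕ, R ≤ (maxMod f)^[n] R := by
  intro n
  induction n with
  | zero => simp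
  | succ n ih =>
    rw [Function.iterate_succ_apply']
    exact ih.trans (hM _ ih).le

lemma orbit_tendsto {f : ℂ → ℂ} (hf : TranscendentalEntire f) {R : ℝ} (hR : 0 < R)
    (hM : ∀ r ≥ R, maxMod f r > r) :
    Tendsto (fun n : ℕ => (maxMod f)^[n] R) atTop atTop := by
  have horb := orbit_ge (f := f) hR hM
  have hmono : Monotone fun n : ℕ => (maxMod f)^[n] R := by
    apply monotone_nat_of_le_succ
    intro n
    rw [Function.iterate_succ_apply']
    exact (hM _ (horb n)).le
  rcases tendsto_of_monotone hmono with h | ⟨l, hl⟩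
  · exact h
  exfalso
  have hlR : R ≤ l := ge_of_tendsto hl (Eventually.of_forall horb)
  have hl0 : 0 < l := hR.trans_le hlR
  have hl' : Tendsto (fun n : ℕ => (maxMod f)^[n+1] R) atTop (𝓝 l) :=
    hl.comp (tendsto_add_atTop_nat 1)
  have key : ∀ θ : ℝ, ‖f (circleMap 0 l θ)‖ ≤ l := by
    intro θ
    have h1 : ∀ n : ℕ, ‖f (circleMap 0 ((maxMod f)^[n] R) θ)‖ ≤
        (maxMod f)^[n+1] R := by
      intro n
      rw [Function.iterate_succ_apply']
      exact le_maxMod hf.1.continuous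
        (by simp [norm_circleMap_zero, _root_.abs_of_pos (hR.trans_le (horb n))])
    have hc : Continuous fun r : ℝ => ‖f (circleMap 0 r θ)‖ := by
      apply continuous_norm.comp
      apply hf.1.continuous.comp
      unfold circleMap
      continuity
    have h2 : Tendsto (fun n : ℕ => ‖f (circleMap 0 ((maxMod f)^[n] R) θ)‖)
        atTop (𝓝 (‖f (circleMap 0 l θ)‖)) := (hc.tendsto l).comp hl
    exact le_of_tendsto_of_tendsto h2 hl' (Eventually.of_forall h1)
  have hle : maxMod f l ≤ l := by
    apply Real.sSup_le _ hl0.le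
    rintro x ⟨z, hz, rfl⟩
    have hz' : circleMap 0 l (Complex.arg z) = z := by
      simp only [circleMap, zero_add]
      rw [← hz]
      exact_mod_cast Complex.norm_mul_exp_arg_mul_I z
    simpa [hz'] using key (Complex.arg z)
  exact absurd (hM l hlR) (not_lt.2 hle)

theorem Afast_subset_Z (f : ℂ → ℂ) (hf : TranscendentalEntire f)
    (R : ℝ) (hR : 0 < R) (hM : ∀ r ≥ R, maxMod f r > r) :
    Afast f R ⊆ {z : ℂ | Tendsto
      (fun n : ℕ => Real.log (Real.log (‖f^[n] z‖)) / n) atTop atTop} := by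
  intro z hz
  simp only [Afast, mem_iUnion] at hz
  obtain ⟨L, hzL⟩ := hz
  simp only [mem_setOf_eq]
  have horb := orbit_ge (f := f) hR hM
  have htop := orbit_tendsto hf hR hM
  rw [tendsto_atTop]
  intro b
  -- choose k with log k ≥ max (b+1) 1
  set c : ℝ := max (b + 1) 1 with hc
  obtain ⟨k0, hk0⟩ := exists_nat_gt (Real.exp c)
  set k : ℕ := k0 + 1 with hk
  have hkpos : (0:ℝ) < (k:ℝ) := by positivity
  have hklog : c ≤ Real.log k := by
    rw [Real.le_log_iff_exp_le hkpos]
    have : (k0:ℝ) ≤ k := by push_cast [hk]; linarith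
    linarith
  have hlogk1 : (1:ℝ) ≤ Real.log k := le_trans (le_max_right _ _) hklog
  have hlogkb : b + 1 ≤ Real.log k := le_trans (le_max_left _ _) hklog
  obtain ⟨r0, hr01, hr0⟩ := maxMod_growth hf k
  -- N with orbit ≥ max r0 (exp 1) for n ≥ N
  obtain ⟨N, hN⟩ := eventually_atTop.1 (tendsto_atTop.1 htop (max r0 (Real.exp 1)))
  have claim1 : ∀ j : ℕ, (k:ℝ)^j ≤ Real.log ((maxMod f)^[N + j] R) := by
    intro j
    induction j with
    | zero =>
      simp only [pow_zero, Nat.add_zero]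
      rw [← Real.log_exp 1]
      exact Real.log_le_log (Real.exp_pos 1) (le_trans (le_max_right _ _) (hN N le_rfl))
    | succ j ih =>
      have hge : max r0 (Real.exp 1) ≤ (maxMod f)^[N + j] R := hN _ (by omega)
      have hx1 : (1:ℝ) ≤ (maxMod f)^[N+j] R := le_trans (hr01.trans (le_max_left _ _)) hge
      have hstep : ((maxMod f)^[N+j] R) ^ k ≤ (maxMod f)^[N + (j+1)] R := by
        have he : N + (j+1) = (N+j) + 1 := rfl
        rw [he, Function.iterate_succ_apply']
        exact hr0 _ (le_trans (le_max_left _ _) hge)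
      have hlog0 : (0:ℝ) ≤ Real.log ((maxMod f)^[N+j] R) :=
        le_trans (by positivity) ih
      calc (k:ℝ)^(j+1) = (k:ℝ) * (k:ℝ)^j := by ring
        _ ≤ (k:ℝ) * Real.log ((maxMod f)^[N+j] R) :=
            mul_le_mul_of_nonneg_left ih hkpos.le
        _ = Real.log (((maxMod f)^[N+j] R) ^ k) := (Real.log_pow _ k).symm
        _ ≤ Real.log ((maxMod f)^[N + (j+1)] R) := Real.log_le_log (by positivity) hstep
  have claim2 : ∀ j : ℕ, (j:ℝ) * Real.log k ≤
      Real.log (Real.log ((maxMod f)^[N + j] R)) := by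
    intro j
    calc (j:ℝ) * Real.log k = Real.log ((k:ℝ)^j) := (Real.log_pow (k:ℝ) j).symm
      _ ≤ Real.log (Real.log ((maxMod f)^[N+j] R)) :=
          Real.log_le_log (by positivity) (claim1 j)
  set C : ℕ := L + N with hC
  rw [eventually_atTop]
  refine ⟨max (C + 1) (⌈(C:ℝ) * (|b|+1)⌉₊ + 1), fun n hn => ?_⟩
  have hn1 : C + 1 ≤ n := le_trans (le_max_left _ _) hn
  have hn2 : (C:ℝ) * (|b|+1) ≤ n := by
    have h1 : (⌈(C:ℝ) * (|b|+1)⌉₊ : ℝ) ≤ n := by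
      have := le_trans (le_max_right _ _) hn
      exact_mod_cast le_trans (Nat.le_succ _) this
    exact le_trans (Nat.le_ceil _) h1
  have hnL : 0 ≤ (n:ℤ) + -(L:ℤ) := by omega
  have habs := hzL n hnL
  set j : ℕ := n - L - N with hj
  have hNj : N + j = ((n:ℤ) + -(L:ℤ)).toNat := by omega
  rw [← hNj] at habs
  have hge : max r0 (Real.exp 1) ≤ (maxMod f)^[N + j] R := hN _ (by omega)
  have hA0 : (0:ℝ) < (maxMod f)^[N + j] R :=
    lt_of_lt_of_le (Real.exp_pos 1) (le_trans (le_max_right _ _) hge)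
  have hlogA1 : (1:ℝ) ≤ Real.log ((maxMod f)^[N + j] R) :=
    le_trans (one_le_pow₀ (by exact_mod_cast Nat.le_add_left 1 k0)) (claim1 j)
  have h1 : Real.log ((maxMod f)^[N + j] R) ≤ Real.log (‖f^[n] z‖) :=
    Real.log_le_log hA0 habs
  have h2 : Real.log (Real.log ((maxMod f)^[N + j] R)) ≤
      Real.log (Real.log (‖f^[n] z‖)) :=
    Real.log_le_log (lt_of_lt_of_le one_pos hlogA1) h1
  have hX : (j:ℝ) * Real.log k ≤ Real.log (Real.log (‖f^[n] z‖)) :=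
    le_trans (claim2 j) h2
  have hnpos : (0:ℝ) < (n:ℕ) := by exact_mod_cast Nat.lt_of_lt_of_le (Nat.succ_pos _) hn1
  rw [le_div_iff₀ hnpos]
  have hjcast : (j:ℝ) = (n:ℝ) - C := by
    have : ((C:ℕ):ℝ) ≤ (n:ℝ) := by exact_mod_cast Nat.le_of_succ_le hn1
    push_cast [hj, hC]
    have hLn : L ≤ n := by omega
    have hLNn : L + N ≤ n := by omega
    rw [Nat.cast_sub (by omega), Nat.cast_sub hLn]
    push_cast
    ring
  have hbabs : b ≤ |b| := le_abs_self b
  have hC0 : (0:ℝ) ≤ (C:ℝ) := Nat.cast_nonneg C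
  have hnC : (C:ℝ) ≤ (n:ℝ) := by exact_mod_cast Nat.le_of_succ_le hn1
  have hkey : b * n ≤ (j:ℝ) * Real.log k := by
    rw [hjcast]
    nlinarith [mul_le_mul_of_nonneg_left hlogkb (sub_nonneg.2 hnC)]
  exact le_trans hkey hX
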